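/- Let u₀₁, u₋₁₂, u₋₂₃, v₋₁₁, v₋₂₂, v₋₃₃, w₋₁₀, w₋₂₁, w₋₃₂ be nonzero complex numbers, and set τ = (u₋₁₂·v₋₃₃·w₋₂₁)/(u₋₂₃·v₋₁₁·w₋₃₂). Then there exist nonzero complex numbers λ₋₃, λ₋₂, λ₋₁, λ₀, λ₁, λ₂, λ₃ and a nonzero complex number c such that λ₀λ₁u₀₁ = 1, λ₋₁λ₂u₋₁₂ = 1, λ₋₂λ₃u₋₂₃ = 1, λ₋₁λ₀w₋₁₀ = 1, λ₋₂λ₁w₋₂₁ = 1, λ₋₃λ₂w₋₃₂ = 1, c·λ₋₁λ₁v₋₁₁ = 1, and c·λ₋₂λ₂v₋₂₂ = 1. Moreover, for ANY nonzero λ₋₃, …, λ₃ and nonzero c satisfying these eight equations, one necessarily has c·λ₋₃λ₃v₋₃₃ = τ. -/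

import Mathlib

/-- Normalization of a ℂ*-invariant 3-plane in `⋀²ℂ⁷`: given nonzero coefficients
`u₀₁, u₋₁₂, u₋₂₃, v₋₁₁, v₋₂₂, v₋₃₃, w₋₁₀, w₋₂₁, w₋₃₂` and
`τ = (u₋₁₂ v₋₃₃ w₋₂₁)/(u₋₂₃ v₋₁₁ w₋₃₂)`, there exist nonzero rescaling factors
`λ₋₃, …, λ₃` and a nonzero `c` satisfying the eight normalization equations; and for
any such rescaling one necessarily has `c·λ₋₃·λ₃·v₋₃₃ = τ`. -/
theorem stmt_15 (u01 u12 u23 v11 v22 v33 w10 w21 w32 : ℂ)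
    (hu01 : u01 ≠ 0) (hu12 : u12 ≠ 0) (hu23 : u23 ≠ 0)
    (hv11 : v11 ≠ 0) (hv22 : v22 ≠ 0) (hv33 : v33 ≠ 0)
    (hw10 : w10 ≠ 0) (hw21 : w21 ≠ 0) (hw32 : w32 ≠ 0)
    (τ : ℂ) (hτ : τ = u12 * v33 * w21 / (u23 * v11 * w32)) :
    (∃ lm3 lm2 lm1 l0 l1 l2 l3 c : ℂ,
      lm3 ≠ 0 ∧ lm2 ≠ 0 ∧ lm1 ≠ 0 ∧ l0 ≠ 0 ∧ l1 ≠ 0 ∧ l2 ≠ 0 ∧ l3 ≠ 0 ∧ c ≠ 0 ∧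
      l0 * l1 * u01 = 1 ∧ lm1 * l2 * u12 = 1 ∧ lm2 * l3 * u23 = 1 ∧
      lm1 * l0 * w10 = 1 ∧ lm2 * l1 * w21 = 1 ∧ lm3 * l2 * w32 = 1 ∧
      c * (lm1 * l1) * v11 = 1 ∧ c * (lm2 * l2) * v22 = 1) ∧
    (∀ lm3 lm2 lm1 l0 l1 l2 l3 c : ℂ,
      lm3 ≠ 0 → lm2 ≠ 0 → lm1 ≠ 0 → l0 ≠ 0 → l1 ≠ 0 → l2 ≠ 0 → l3 ≠ 0 → c ≠ 0 →
      l0 * l1 * u01 = 1 → lm1 * l2 * u12 = 1 → lm2 * l3 * u23 = 1 →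
      lm1 * l0 * w10 = 1 → lm2 * l1 * w21 = 1 → lm3 * l2 * w32 = 1 →
      c * (lm1 * l1) * v11 = 1 → c * (lm2 * l2) * v22 = 1 →
      c * (lm3 * l3) * v33 = τ) := by
  constructor
  · obtain ⟨x, hx⟩ := Complex.isAlgClosed.exists_pow_nat_eq
      (u01 ^ 2 * v22 / (w10 ^ 2 * w21 * u12 * v11)) (n := 4) (by norm_num)
    have ha : u01 ^ 2 * v22 / (w10 ^ 2 * w21 * u12 * v11) ≠ 0 := by
      apply div_ne_zero <;> [skip; skip] <;>
        first
          | exact mul_ne_zero (pow_ne_zero _ hu01) hv22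
          | exact mul_ne_zero (mul_ne_zero (mul_ne_zero (pow_ne_zero _ hw10) hw21) hu12) hv11
    have hxne : x ≠ 0 := by
      intro h; rw [h] at hx; simp at hx; exact ha hx.symm
    refine ⟨x * u12 / w32, u01 / (x * w10 * w21), x, (x * w10)⁻¹, x * w10 / u01,
      (x * u12)⁻¹, x * w10 * w21 / (u01 * u23), u01 / (x ^ 2 * w10 * v11),
      ?_, ?_, ?_, ?_, ?_, ?_, ?_, ?_, ?_, ?_, ?_, ?_, ?_, ?_, ?_, ?_⟩
    · exact div_ne_zero (mul_ne_zero hxne hu12) hw32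
    · exact div_ne_zero hu01 (mul_ne_zero (mul_ne_zero hxne hw10) hw21)
    · exact hxne
    · exact inv_ne_zero (mul_ne_zero hxne hw10)
    · exact div_ne_zero (mul_ne_zero hxne hw10) hu01
    · exact inv_ne_zero (mul_ne_zero hxne hu12)
    · exact div_ne_zero (mul_ne_zero (mul_ne_zero hxne hw10) hw21) (mul_ne_zero hu01 hu23)
    · exact div_ne_zero hu01 (mul_ne_zero (mul_ne_zero (pow_ne_zero _ hxne) hw10) hv11)
    all_goals
      field_simp
      try rw [div_eq_one_iff_eq (by simp [hxne, hu01, hu12, hu23, hv11, hv22, hw10,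
        hw21, hw32, pow_ne_zero])]
      try ring
    have hx4 : x ^ 4 * (w10 ^ 2 * w21 * u12 * v11) = u01 ^ 2 * v22 := by
      rw [hx]
      exact div_mul_cancel₀ _ (by simp [hw10, hw21, hu12, hv11, pow_ne_zero])
    linear_combination -hx4
  · intro lm3 lm2 lm1 l0 l1 l2 l3 c h3 h2n h1n h0 hl1 hl2 hl3 hc
    intro e1 e2 e3 e4 e5 e6 e7 e8
    subst hτ
    have hu12' : u12 = (lm1 * l2)⁻¹ := by
      field_simp
      linear_combination e2
    have hw21' : w21 = (lm2 * l1)⁻¹ := by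
      field_simp
      linear_combination e5
    have hu23' : u23 = (lm2 * l3)⁻¹ := by
      field_simp
      linear_combination e3
    have hv11' : v11 = (c * lm1 * l1)⁻¹ := by
      field_simp
      linear_combination e7
    have hw32' : w32 = (lm3 * l2)⁻¹ := by
      field_simp
      linear_combination e6
    rw [hu12', hw21', hu23', hv11', hw32']
    field_simp
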